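/- Let g : ℝ → ℝ be three times continuously differentiable on a neighborhood of l with g(l) = 0 and g'(l) ≠ 0. Define Ψ(x) = x - g(x)/g'(l) + g(x)²·g''(l)/(2·g'(l)³). Then there exist C > 0 and δ > 0 such that for all x with |x - l| < δ, |Ψ(x) - l| ≤ C·|x - l|³. -/

import Mathlib

set_option maxHeartbeats 1000000

open Metric

/-- Two-sided MVT bound: if `f l = 0` and `|f'| ≤ M |y-l|^k` on a ball, then
`|f y| ≤ M |y-l|^(k+1)` on the ball. -/
lemma bound_aux {f f' : ℝ → ℝ} {l δ M : ℝ} {k : ℕ} (hM : 0 ≤ M)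
    (hf : ∀ y ∈ ball l δ, HasDerivAt f (f' y) y)
    (hf0 : f l = 0)
    (hbd : ∀ y ∈ ball l δ, |f' y| ≤ M * |y - l| ^ k) :
    ∀ y ∈ ball l δ, |f y| ≤ M * |y - l| ^ (k + 1) := by
  intro y hy
  have hyl : |y - l| < δ := by simpa [Real.dist_eq] using hy
  have hsub : closedBall l |y - l| ⊆ ball l δ :=
    closedBall_subset_ball hyl
  have hconv : Convex ℝ (closedBall l |y - l|) := convex_closedBall _ _
  have key := hconv.norm_image_sub_le_of_norm_hasDerivWithin_le
    (f := f) (f' := f') (C := M * |y - l| ^ k) (x := l) (y := y)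
    (fun z hz => ((hf z (hsub hz)).hasDerivWithinAt))
    (fun z hz => by
      have hz' : |z - l| ≤ |y - l| := by simpa [Real.dist_eq] using hz
      refine le_trans (hbd z (hsub hz)) ?_
      exact mul_le_mul_of_nonneg_left (pow_le_pow_left₀ (abs_nonneg _) hz' k) hM)
    (mem_closedBall_self (abs_nonneg _))
    (Metric.mem_closedBall.mpr (le_of_eq (Real.dist_eq y l)))
  have : |f y - f l| ≤ M * |y - l| ^ k * |y - l| := by
    simpa [Real.norm_eq_abs] using key
  calc |f y| = |f y - f l| := by rw [hf0, sub_zero]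
    _ ≤ M * |y - l| ^ k * |y - l| := this
    _ = M * |y - l| ^ (k + 1) := by ring

theorem stmt_5 (g : ℝ → ℝ) (l : ℝ) (hg : ContDiffAt ℝ 3 g l)
    (hgl : g l = 0) (hg' : deriv g l ≠ 0) :
    ∃ C > 0, ∃ δ > 0, ∀ x : ℝ, |x - l| < δ →
      |(x - g x / deriv g l + g x ^ 2 * iteratedDeriv 2 g l / (2 * (deriv g l) ^ 3)) - l|
        ≤ C * |x - l| ^ 3 := by
  obtain ⟨u, hu, hcd⟩ := hg.contDiffOn (le_refl 3) (by simp)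
  obtain ⟨ε, hε, hball⟩ := Metric.mem_nhds_iff.mp hu
  set a := deriv g l with ha
  set b := iteratedDeriv 2 g l with hbdef
  set s := ball l ε with hs
  have hcd' : ContDiffOn ℝ 3 g s := hcd.mono hball
  set G1 := deriv g with hG1def
  set G2 := deriv G1 with hG2def
  set G3 := deriv G2 with hG3def
  have hG1 : ContDiffOn ℝ 2 G1 s := hcd'.deriv_of_isOpen isOpen_ball (by norm_num)
  have hG2 : ContDiffOn ℝ 1 G2 s := hG1.deriv_of_isOpen isOpen_ball (by norm_num)
  have hG3cont : ContinuousOn G3 s := hG2.continuousOn_deriv_of_isOpen isOpen_ball (by norm_num)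
  -- HasDerivAt facts on s
  have hgd : ∀ y ∈ s, HasDerivAt g (G1 y) y := fun y hy =>
    ((hcd'.differentiableOn (by norm_num)).differentiableAt
      (isOpen_ball.mem_nhds hy)).hasDerivAt
  have hG1d : ∀ y ∈ s, HasDerivAt G1 (G2 y) y := fun y hy =>
    ((hG1.differentiableOn (by norm_num)).differentiableAt
      (isOpen_ball.mem_nhds hy)).hasDerivAt
  have hG2d : ∀ y ∈ s, HasDerivAt G2 (G3 y) y := fun y hy =>
    ((hG2.differentiableOn (by norm_num)).differentiableAt
      (isOpen_ball.mem_nhds hy)).hasDerivAt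
  have hb : b = G2 l := by
    rw [hbdef, iteratedDeriv_succ, iteratedDeriv_one]
  set δ := ε / 2 with hδdef
  have hδ : 0 < δ := by positivity
  have hδs : ball l δ ⊆ s := ball_subset_ball (by linarith)
  have hcbs : closedBall l δ ⊆ s := by
    intro z hz
    have : |z - l| ≤ δ := by simpa [Real.dist_eq] using hz
    simp only [hs, mem_ball, Real.dist_eq]
    linarith
  -- bound on G3 on closedBall l δ
  obtain ⟨M0, hM0⟩ := (isCompact_closedBall l δ).exists_bound_of_continuousOn
    (hG3cont.mono hcbs)
  set M := max M0 0 with hMdef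
  have hM : 0 ≤ M := le_max_right _ _
  have hMb : ∀ y ∈ ball l δ, |G3 y| ≤ M := fun y hy =>
    le_trans (by simpa [Real.norm_eq_abs] using hM0 y (ball_subset_closedBall hy))
      (le_max_left _ _)
  -- chain of MVT bounds
  have step2 : ∀ y ∈ ball l δ, |G2 y - b| ≤ M * |y - l| ^ 1 := by
    refine bound_aux (f' := G3) hM
      (fun y hy => (hG2d y (hδs hy)).sub_const b) (by rw [hb]; ring) ?_
    intro y hy; simpa using hMb y hy
  have step1 : ∀ y ∈ ball l δ, |G1 y - (a + b * (y - l))| ≤ M * |y - l| ^ 2 := by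
    refine bound_aux (f' := fun y => G2 y - b) hM
      (fun y hy => ?_) ?_ step2
    · have h1 : HasDerivAt (fun y => a + b * (y - l)) b y := by
        have : HasDerivAt (fun y : ℝ => y - l) 1 y := (hasDerivAt_id y).sub_const l
        simpa using ((this.const_mul b).const_add a)
      exact (hG1d y (hδs hy)).sub h1
    · have : G1 l = a := rfl
      simp [this]
  have step0 : ∀ y ∈ ball l δ, |g y - (a * (y - l) + b / 2 * (y - l) ^ 2)| ≤ M * |y - l| ^ 3 := by
    refine bound_aux (f' := fun y => G1 y - (a + b * (y - l))) hM
      (fun y hy => ?_) ?_ step1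
    · have h1 : HasDerivAt (fun y => a * (y - l) + b / 2 * (y - l) ^ 2)
          (a + b * (y - l)) y := by
        have hid : HasDerivAt (fun y : ℝ => y - l) 1 y := (hasDerivAt_id y).sub_const l
        have hsq : HasDerivAt (fun y : ℝ => (y - l) ^ 2) (2 * (y - l)) y := by
          have := hid.pow 2; simp at this; exact this
        have := ((hid.const_mul a).add (hsq.const_mul (b / 2)))
        exact this.congr_deriv (by ring)
      exact (hgd y (hδs hy)).sub h1
    · simp [hgl]
  -- constants
  set K1 := |b| / 2 + M * δ with hK1def
  set K2 := K1 * δ + 2 * |a| with hK2def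
  have hK1 : 0 ≤ K1 := by positivity
  have hK2 : 0 ≤ K2 := by positivity
  set c := |b| / (2 * |a| ^ 3) with hcdef
  have hc : 0 ≤ c := by positivity
  have haa : (0:ℝ) < |a| := abs_pos.mpr hg'
  refine ⟨M / |a| + c * K1 * K2 + 1, by positivity, δ, hδ, fun x hx => ?_⟩
  have hxball : x ∈ ball l δ := by simpa [Real.dist_eq] using hx
  set t := x - l with htdef
  set r := g x - (a * t + b / 2 * t ^ 2) with hrdef
  have hrb : |r| ≤ M * |t| ^ 3 := step0 x hxball
  have htabs : |t| < δ := hx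
  have ht0 : 0 ≤ |t| := abs_nonneg t
  -- key algebraic identity
  have hid : (x - g x / a + g x ^ 2 * b / (2 * a ^ 3)) - l
      = -(r / a) + b / (2 * a ^ 3) * ((g x - a * t) * (g x + a * t)) := by
    rw [hrdef, htdef]; field_simp; ring
  have h1 : |g x - a * t| ≤ K1 * |t| ^ 2 := by
    have : g x - a * t = b / 2 * t ^ 2 + r := by rw [hrdef]; ring
    rw [this]
    calc |b / 2 * t ^ 2 + r| ≤ |b / 2 * t ^ 2| + |r| := abs_add_le _ _
      _ ≤ |b| / 2 * |t| ^ 2 + M * |t| ^ 3 := by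
          rw [abs_mul, abs_div, abs_two, abs_pow]
          exact add_le_add le_rfl hrb
      _ ≤ |b| / 2 * |t| ^ 2 + M * δ * |t| ^ 2 := by
          have hh : 0 ≤ M * (δ - |t|) * |t| ^ 2 :=
            mul_nonneg (mul_nonneg hM (by linarith)) (pow_nonneg ht0 2)
          nlinarith [hh]
      _ = K1 * |t| ^ 2 := by rw [hK1def]; ring
  have h2 : |g x + a * t| ≤ K2 * |t| := by
    have : g x + a * t = (g x - a * t) + 2 * (a * t) := by ring
    rw [this]
    calc |(g x - a * t) + 2 * (a * t)| ≤ |g x - a * t| + |2 * (a * t)| := abs_add_le _ _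
      _ ≤ K1 * |t| ^ 2 + 2 * |a| * |t| := by
          have he : |2 * (a * t)| = 2 * |a| * |t| := by rw [abs_mul, abs_mul, abs_two]; ring
          rw [he]
          exact add_le_add h1 le_rfl
      _ ≤ K1 * δ * |t| + 2 * |a| * |t| := by
          have hh : 0 ≤ K1 * (δ - |t|) * |t| :=
            mul_nonneg (mul_nonneg hK1 (by linarith)) ht0
          nlinarith [hh]
      _ = K2 * |t| := by rw [hK2def]; ring
  rw [hid]
  calc |(-(r / a) + b / (2 * a ^ 3) * ((g x - a * t) * (g x + a * t)))|
      ≤ |r / a| + |b / (2 * a ^ 3) * ((g x - a * t) * (g x + a * t))| := by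
        refine le_trans (abs_add_le _ _) ?_
        rw [abs_neg]
    _ = |r| / |a| + c * (|g x - a * t| * |g x + a * t|) := by
        have hcabs : |b / (2 * a ^ 3)| = c := by
          rw [hcdef, abs_div, abs_mul, abs_two, abs_pow]
        rw [abs_div, abs_mul (b / (2 * a ^ 3)), abs_mul (g x - a * t), hcabs]
    _ ≤ (M * |t| ^ 3) / |a| + c * ((K1 * |t| ^ 2) * (K2 * |t|)) := by
        refine add_le_add (div_le_div_of_nonneg_right hrb haa.le |>.trans (le_refl _)) ?_
        refine mul_le_mul_of_nonneg_left ?_ hc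
        exact mul_le_mul h1 h2 (abs_nonneg _) (by positivity)
    _ = (M / |a| + c * K1 * K2) * |t| ^ 3 := by ring
    _ ≤ (M / |a| + c * K1 * K2 + 1) * |t| ^ 3 := by nlinarith
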